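/- Let π be an avoider of length n−1 ≥ 1, let 1 ≤ i ≤ lmax(π), and let π̂ be the permutation of [n] obtained from π by inserting the new largest letter n immediately before the i-th left-to-right maximum of π (counted from the left). Then π̂ is an avoider and lmax(π̂) = i. -/

import Mathlib

/-
Common definitions: permutations of {1,…,n} as words (lists), dashed
pattern avoidance, permutation statistics, and β(1,0)-trees with their
statistics, following the paper
"Decompositions and statistics for β(1,0)-trees and nonseparable permutations".
-/

namespace Beta10

attribute [local instance] Classical.propDecidable

/-- `l` is a permutation of `{1, …, n}` (written as a word). -/
def IsPermOf (n : ℕ) (l : List ℕ) : Prop := l.Perm (List.range' 1 n)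

/-- an occurrence of the dashed pattern 3-1-4-2 at positions `i < j < k < m` -/
def occ3142 (l : List ℕ) (i j k m : ℕ) : Prop :=
  i < j ∧ j < k ∧ k < m ∧ m < l.length ∧
  l.getD j 0 < l.getD m 0 ∧ l.getD m 0 < l.getD i 0 ∧ l.getD i 0 < l.getD k 0

def pat3142 (l : List ℕ) : Prop := ∃ i j k m, occ3142 l i j k m

/-- an occurrence of the dashed pattern 2-41-3 at positions `i < j, j+1 < k` -/
def occ2413 (l : List ℕ) (i j k : ℕ) : Prop :=
  i < j ∧ j + 1 < k ∧ k < l.length ∧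
  l.getD (j+1) 0 < l.getD i 0 ∧ l.getD i 0 < l.getD k 0 ∧ l.getD k 0 < l.getD j 0

def pat2413 (l : List ℕ) : Prop := ∃ i j k, occ2413 l i j k

/-- an *avoider*: a permutation of `{1,…,n}` avoiding 3-1-4-2 and 2-41-3 -/
def Avoider (n : ℕ) (l : List ℕ) : Prop := IsPermOf n l ∧ ¬ pat3142 l ∧ ¬ pat2413 l

/-- direct sum of permutations -/
def dsum (σ τ : List ℕ) : List ℕ := σ ++ τ.map (· + σ.length)

/-- a nonempty permutation that is not a direct sum of two nonempty permutations -/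
def Indecomposable (l : List ℕ) : Prop :=
  l ≠ [] ∧ ¬ ∃ σ τ : List ℕ, σ ≠ [] ∧ τ ≠ [] ∧ l = dsum σ τ

/-- position `p` holds a left-to-right maximum of `l` -/
def IsLRMax (l : List ℕ) (p : ℕ) : Prop :=
  p < l.length ∧ ∀ j < p, l.getD j 0 < l.getD p 0

/-- position `p` holds a left-to-right minimum of `l` -/
def IsLRMin (l : List ℕ) (p : ℕ) : Prop :=
  p < l.length ∧ ∀ j < p, l.getD p 0 < l.getD j 0

/-- position `p` holds a right-to-left maximum of `l` -/
def IsRLMax (l : List ℕ) (p : ℕ) : Prop :=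
  p < l.length ∧ ∀ j < l.length, p < j → l.getD j 0 < l.getD p 0

/-- the number of left-to-right maxima -/
noncomputable def lmax (l : List ℕ) : ℕ :=
  ((Finset.range l.length).filter (fun p => IsLRMax l p)).card

/-- the number of left-to-right minima -/
noncomputable def lmin (l : List ℕ) : ℕ :=
  ((Finset.range l.length).filter (fun p => IsLRMin l p)).card

/-- the number of right-to-left maxima -/
noncomputable def rmax (l : List ℕ) : ℕ :=
  ((Finset.range l.length).filter (fun p => IsRLMax l p)).card

/-- the number of ascents -/
noncomputable def asc (l : List ℕ) : ℕ :=
  ((Finset.range (l.length - 1)).filter (fun p => l.getD p 0 < l.getD (p+1) 0)).card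

/-- the number of descents -/
noncomputable def des (l : List ℕ) : ℕ :=
  ((Finset.range (l.length - 1)).filter (fun p => l.getD (p+1) 0 < l.getD p 0)).card

/-- `ldr l` : the largest `i` with `a₁ > a₂ > ⋯ > aᵢ` (and `0` for the empty word) -/
noncomputable def ldr (l : List ℕ) : ℕ :=
  ((Finset.range (l.length + 1)).filter
    (fun i => ∀ j, j + 1 < i → l.getD (j+1) 0 < l.getD j 0)).sup id

/-- `lir l` : the largest `i` with `a₁ < a₂ < ⋯ < aᵢ` (and `0` for the empty word) -/
noncomputable def lir (l : List ℕ) : ℕ :=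
  ((Finset.range (l.length + 1)).filter
    (fun i => ∀ j, j + 1 < i → l.getD j 0 < l.getD (j+1) 0)).sup id

/-- the factor of `l` occupying positions `p, …, q-1` is a component of `l`:
it is nonempty, all letters before it are smaller, all letters after it are
larger, and it admits no nontrivial splitting `αβ` with `α ≺ β`. -/
def IsComponent (l : List ℕ) (p q : ℕ) : Prop :=
  p < q ∧ q ≤ l.length ∧
  (∀ i < p, ∀ j, p ≤ j → j < q → l.getD i 0 < l.getD j 0) ∧
  (∀ j, p ≤ j → j < q → ∀ i, q ≤ i → i < l.length → l.getD j 0 < l.getD i 0) ∧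
  ¬ ∃ r, p < r ∧ r < q ∧ ∀ i, p ≤ i → i < r → ∀ j, r ≤ j → j < q → l.getD i 0 < l.getD j 0

/-- the number of components of `l` -/
noncomputable def comp (l : List ℕ) : ℕ :=
  (((Finset.range (l.length + 1)) ×ˢ (Finset.range (l.length + 1))).filter
    (fun pq => IsComponent l pq.1 pq.2)).card

/-- insert the letter `a` into `l` so that it occupies (0-based) position `r` -/
def insertAt (l : List ℕ) (r : ℕ) (a : ℕ) : List ℕ := l.take r ++ a :: l.drop r

/-- the (0-based) positions of the left-to-right maxima, from left to right -/
noncomputable def lrMaxPos (l : List ℕ) : List ℕ :=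
  (List.range l.length).filter (fun p => decide (IsLRMax l p))

/-- the finite set of avoiders of `{1,…,n}` -/
noncomputable def avoidersFinset (n : ℕ) : Finset (List ℕ) :=
  ((List.range' 1 n).permutations.toFinset).filter (fun l => ¬ pat3142 l ∧ ¬ pat2413 l)

/-- reverse of a permutation -/
def revP (l : List ℕ) : List ℕ := l.reverse

/-- complement of a permutation of `{1,…,n}` -/
def complP (n : ℕ) (l : List ℕ) : List ℕ := l.map (fun a => n + 1 - a)

/-- inverse of a permutation of `{1,…,n}` (as a word: the `v`-th letter is the
position of the letter `v` in `l`, 1-based) -/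
def invP (l : List ℕ) : List ℕ :=
  (List.range' 1 l.length).map (fun v => l.idxOf v + 1)

/-- rooted plane trees with nodes labeled by natural numbers -/
inductive PTree : Type where
  | node : ℕ → List PTree → PTree

namespace PTree

/-- the label of the root -/
def label : PTree → ℕ | node l _ => l

/-- the list of subtrees of the root -/
def children : PTree → List PTree | node _ cs => cs

/-- the number of nodes -/
def size : PTree → ℕ
  | node _ cs => 1 + (cs.attach.map (fun x => size x.1)).sum
decreasing_by have := List.sizeOf_lt_of_mem x.2; simp at this ⊢; omega

/-- the number of leaves -/
def leaves : PTree → ℕ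
  | node _ [] => 1
  | node _ (c :: cs) => ((c :: cs).attach.map (fun x => leaves x.1)).sum
decreasing_by have := List.sizeOf_lt_of_mem x.2; simp at this ⊢; omega

/-- the number of internal (non-leaf) nodes; the root counts as internal -/
def internalN : PTree → ℕ
  | node _ [] => 0
  | node _ (c :: cs) => 1 + ((c :: cs).attach.map (fun x => internalN x.1)).sum
decreasing_by have := List.sizeOf_lt_of_mem x.2; simp at this ⊢; omega

/-- the number of children of the root -/
def subT (t : PTree) : ℕ := t.children.length

/-- the number of edges on the path from the root to the leftmost leaf -/
def lpath : PTree → ℕ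
  | node _ [] => 0
  | node _ (c :: _) => lpath c + 1

mutual
/-- the number of edges on the path from the root to the rightmost leaf -/
def rpath : PTree → ℕ
  | .node _ [] => 0
  | .node _ (c :: cs) => rpathAux c cs + 1
termination_by t => sizeOf t
def rpathAux : PTree → List PTree → ℕ
  | c, [] => rpath c
  | _, c' :: cs => rpathAux c' cs
termination_by c cs => sizeOf c + sizeOf cs
end

/-- the number of nodes with label 1, other than the root, on the path from
the root to the leftmost leaf -/
def lsub : PTree → ℕ
  | node _ [] => 0
  | node _ (c :: _) => lsub c + (if c.label = 1 then 1 else 0)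

mutual
/-- the number of nodes with label 1, other than the root, on the path from
the root to the rightmost leaf -/
def rsub : PTree → ℕ
  | .node _ [] => 0
  | .node _ (c :: cs) => rsubAux c cs
termination_by t => sizeOf t
def rsubAux : PTree → List PTree → ℕ
  | c, [] => rsub c + (if c.label = 1 then 1 else 0)
  | _, c' :: cs => rsubAux c' cs
termination_by c cs => sizeOf c + sizeOf cs
end

/-- the number of internal nodes common to the left path and the right path -/
def stem : PTree → ℕ
  | node _ [] => 0
  | node _ [c] => stem c + 1
  | node _ (_ :: _ :: _) => 1

/-- `tsum u v = u ⊕ v`: the subtrees of the root are those of `u` followed by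
those of `v`, and the root label is the sum of the root labels -/
def tsum (u v : PTree) : PTree := node (u.label + v.label) (u.children ++ v.children)

/-- `lam i t = λ(i, t)`: join a new root via an edge to the old root; both the
new root and the old root get the label `i` -/
def lam (i : ℕ) (t : PTree) : PTree := node i [node i t.children]

/-- the one-edge tree (two nodes, both labeled 1) -/
def edgeT : PTree := node 1 [node 1 []]

/-- `iterEdge k = ⊕^k edgeT`, the `k`-fold sum of one-edge trees -/
def iterEdge : ℕ → PTree
  | 0 => node 0 []
  | k + 1 => tsum edgeT (iterEdge k)

/-- does the path from the root to the leftmost leaf contain a node,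
other than the leaf itself, with label 1? -/
def leftPathOne : PTree → Bool
  | node _ [] => false
  | node l (c :: _) => (l == 1) || leftPathOne c

/-- delete the leftmost leaf and decrease by 1 the labels of all nodes on the
path from the root to it -/
def delLeft : PTree → PTree
  | node l [] => node l []
  | node l (node _ [] :: cs) => node (l - 1) cs
  | node l (c :: cs) => node (l - 1) (delLeft c :: cs)

/-- iterate: if the path from the root to the leftmost leaf contains a node
(other than that leaf) with label 1, stop and report 1 plus the number of
leaves already deleted; otherwise delete the leftmost leaf (decreasing the
labels on its path) and continue -/
def stemGo : ℕ → PTree → ℕ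
  | 0, _ => 0
  | fuel + 1, t => if leftPathOne t then 1 else 1 + stemGo fuel (delLeft t)

/-- the statistic stem′ of the paper: the index of the first leaf (from the
left) whose path to the root contains a node, other than the leaf itself,
with label 1, in the iterated leaf-deletion process -/
def stemP (t : PTree) : ℕ := stemGo t.size t

/-- the mirror image: recursively reverse the order of subtrees -/
def mirror : PTree → PTree
  | node l cs => node l ((cs.attach.map (fun x => mirror x.1)).reverse)
decreasing_by have := List.sizeOf_lt_of_mem x.2; simp at this ⊢; omega

/-- the statistic stem~ : stem′ of the mirror image -/
def stemM (t : PTree) : ℕ := stemP (mirror t)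

/-- `obs u v = u ⊘ v`: identify the rightmost leaf of `u` with the root of `v`;
the identified node gets label 1 -/
def obs : PTree → PTree → PTree
  | node _ [], v => node 1 v.children
  | node l [c], v => node l [obs c v]
  | node l (c :: c' :: cs), v => node l (c :: (obs (node l (c' :: cs)) v).children)
termination_by u _ => sizeOf u
decreasing_by all_goals (simp; try omega)

/-- validity of a non-root node of a β(1,0)-tree (together with all of its
descendants): a leaf has label 1, and any other node has a positive label
that is at most the sum of its children's labels -/
inductive IsBetaSub : PTree → Prop where
  | mk (l : ℕ) (cs : List PTree)
      (hleaf : cs = [] → l = 1)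
      (hinternal : cs ≠ [] → 1 ≤ l ∧ l ≤ (cs.map label).sum)
      (hchildren : ∀ c ∈ cs, IsBetaSub c) : IsBetaSub (node l cs)

end PTree

/-- `t` is a β(1,0)-tree: the root label equals the sum of the children's
labels, and every non-root node is valid -/
def IsBeta (t : PTree) : Prop :=
  t.label = (t.children.map PTree.label).sum ∧ ∀ c ∈ t.children, PTree.IsBetaSub c

end Beta10

namespace Beta10


attribute [local instance] Classical.propDecidable

section Stmt2Aux

lemma length_insertAt' {l : List ℕ} {r a : ℕ} (hr : r ≤ l.length) :
    (insertAt l r a).length = l.length + 1 := by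
  simp [insertAt]; omega

lemma getD_insertAt_lt' {l : List ℕ} {r a p : ℕ} (hr : r ≤ l.length) (hp : p < r) :
    (insertAt l r a).getD p 0 = l.getD p 0 := by
  unfold insertAt
  rw [List.getD_append _ _ _ _ (by simp [hr]; omega)]
  simp [List.getD_eq_getElem?_getD, List.getElem?_take, hp]

lemma getD_insertAt_self' {l : List ℕ} {r a : ℕ} (hr : r ≤ l.length) :
    (insertAt l r a).getD r 0 = a := by
  unfold insertAt
  rw [List.getD_append_right _ _ _ _ (by simp [hr])]
  simp [hr]

lemma getD_insertAt_gt' {l : List ℕ} {r a p : ℕ} (hr : r ≤ l.length) (hp : r < p) :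
    (insertAt l r a).getD p 0 = l.getD (p - 1) 0 := by
  unfold insertAt
  rw [List.getD_append_right _ _ _ _ (by simp [hr]; omega)]
  simp only [List.length_take, min_eq_left hr]
  rcases Nat.exists_eq_add_of_lt hp with ⟨k, rfl⟩
  have h1 : r + k + 1 - r = k + 1 := by omega
  have h2 : r + k + 1 - 1 = r + k := by omega
  rw [h1, h2, List.getD_cons_succ]
  simp [List.getD_eq_getElem?_getD, List.getElem?_drop]

/-- position in `l` of the letter occupying position `p ≠ r` of `insertAt l r a` -/
def oldPos (r p : ℕ) : ℕ := if p < r then p else p - 1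

lemma getD_insertAt_ne {l : List ℕ} {r a p : ℕ} (hr : r ≤ l.length) (hp : p ≠ r) :
    (insertAt l r a).getD p 0 = l.getD (oldPos r p) 0 := by
  unfold oldPos
  rcases Nat.lt_or_ge p r with h | h
  · rw [if_pos h, getD_insertAt_lt' hr h]
  · have h' : r < p := lt_of_le_of_ne h (Ne.symm hp)
    rw [if_neg (by omega), getD_insertAt_gt' hr h']

lemma oldPos_mono {r p q : ℕ} (h : p < q) (hp : p ≠ r) (hq : q ≠ r) :
    oldPos r p < oldPos r q := by
  unfold oldPos; split_ifs <;> omega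

lemma oldPos_succ {r b : ℕ} (hb : b ≠ r) (hb1 : b + 1 ≠ r) :
    oldPos r (b + 1) = oldPos r b + 1 := by
  unfold oldPos; split_ifs <;> omega

lemma oldPos_lt_len {r p len : ℕ} (hr : r ≤ len) (hp : p < len + 1) (hpr : p ≠ r) :
    oldPos r p < len := by
  unfold oldPos; split_ifs <;> omega

lemma length_lrMaxPos (l : List ℕ) : (lrMaxPos l).length = lmax l := rfl

lemma mem_lrMaxPos {l : List ℕ} {p : ℕ} : p ∈ lrMaxPos l ↔ IsLRMax l p := by
  simp only [lrMaxPos, List.mem_filter, List.mem_range, decide_eq_true_eq]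
  exact ⟨fun h => h.2, fun h => ⟨h.1, h⟩⟩

lemma sorted_lrMaxPos (l : List ℕ) : (lrMaxPos l).Pairwise (· < ·) :=
  (List.pairwise_lt_range).filter _

end Stmt2Aux


/-- Let `l` be an avoider of length `n - 1 ≥ 1`, let
`1 ≤ i ≤ lmax l`, and let `l̂` be obtained from `l` by inserting the new
largest letter `n` immediately before the `i`-th left-to-right maximum of `l`.
Then `l̂` is an avoider and `lmax l̂ = i`. -/
theorem statement_2 (n : ℕ) (hn : 2 ≤ n) (l : List ℕ) (hav : Avoider (n - 1) l)
    (i : ℕ) (hi1 : 1 ≤ i) (hi2 : i ≤ lmax l) :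
    Avoider n (insertAt l ((lrMaxPos l).getD (i - 1) 0) n) ∧
    lmax (insertAt l ((lrMaxPos l).getD (i - 1) 0) n) = i := by
  obtain ⟨hperm, h3142, h2413⟩ := hav
  set L := lrMaxPos l with hLdef
  have hidx : i - 1 < L.length := by
    rw [hLdef, length_lrMaxPos]; omega
  set r := L.getD (i - 1) 0 with hrdef
  have hrget : r = L.get ⟨i - 1, hidx⟩ := by
    rw [hrdef, List.getD_eq_getElem L 0 hidx]; rfl
  have hrmem : r ∈ L := by rw [hrget]; exact List.get_mem _ _
  have hrmax : IsLRMax l r := mem_lrMaxPos.1 hrmem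
  have hrlen : r < l.length := hrmax.1
  have hrle : r ≤ l.length := le_of_lt hrlen
  set lh := insertAt l r n with hlh
  have hlenh : lh.length = l.length + 1 := by rw [hlh]; exact length_insertAt' hrle
  have hval : ∀ p, p < l.length → l.getD p 0 < n := by
    intro p hp
    have hm : l.getD p 0 ∈ l := by
      rw [List.getD_eq_getElem l 0 hp]; exact List.getElem_mem hp
    have hmem := (hperm.mem_iff).1 hm
    rw [List.mem_range'_1] at hmem
    omega
  have hgdlt : ∀ p, p < r → lh.getD p 0 = l.getD p 0 := by
    intro p hp; rw [hlh]; exact getD_insertAt_lt' hrle hp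
  have hgdgt : ∀ p, r < p → lh.getD p 0 = l.getD (p - 1) 0 := by
    intro p hp; rw [hlh]; exact getD_insertAt_gt' hrle hp
  have hgd : ∀ p, p ≠ r → lh.getD p 0 = l.getD (oldPos r p) 0 := by
    intro p hp; rw [hlh]; exact getD_insertAt_ne hrle hp
  have hself : lh.getD r 0 = n := by rw [hlh]; exact getD_insertAt_self' hrle
  have hvaln : ∀ p, p < l.length + 1 → p ≠ r → lh.getD p 0 < n := by
    intro p hp hpr
    rw [hgd p hpr]
    exact hval _ (oldPos_lt_len hrle hp hpr)
  constructor
  · refine ⟨?_, ?_, ?_⟩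
    · -- IsPermOf
      obtain ⟨m, hm⟩ : ∃ m, n = m + 1 := ⟨n - 1, by omega⟩
      rw [hlh, IsPermOf, insertAt]
      have p1 : (l.take r ++ n :: l.drop r).Perm (n :: l) := by
        have h := List.perm_middle (a := n) (l₁ := l.take r) (l₂ := l.drop r)
        rwa [List.take_append_drop] at h
      have p2 : (n :: l).Perm (n :: List.range' 1 (n - 1)) := hperm.cons n
      have p3 : (List.range' 1 (n - 1) ++ [n]).Perm (n :: List.range' 1 (n - 1)) :=
        List.perm_append_singleton _ _
      have p4 : List.range' 1 (n - 1) ++ [n] = List.range' 1 n := by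
        subst hm
        simp only [Nat.add_sub_cancel]
        rw [List.range'_concat]
        norm_num [Nat.add_comm]
      have p5 : (n :: List.range' 1 (n - 1)).Perm (List.range' 1 n) := by
        rw [← p4]; exact p3.symm
      exact (p1.trans p2).trans p5
    · -- avoid 3142
      rintro ⟨a, b, c, d, hab, hbc, hcd, hd, h1, h2, h3⟩
      rw [hlenh] at hd
      by_cases hcr : c = r
      · have har : a < r := by omega
        have hbr : b < r := by omega
        have hdr : r < d := by omega
        rw [hgdlt a har] at h2 h3
        rw [hgdlt b hbr] at h1
        rw [hgdgt d hdr] at h1 h2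
        by_cases hdr1 : d - 1 = r
        · rw [hdr1] at h2
          exact absurd h2 (not_lt.2 (le_of_lt (hrmax.2 a har)))
        · refine h3142 ⟨a, b, r, d - 1, hab, by omega, by omega, by omega, h1, h2, ?_⟩
          exact hrmax.2 a har
      · have hvc : lh.getD c 0 < n := hvaln c (by omega) hcr
        by_cases har : a = r
        · rw [har, hself] at h3; omega
        by_cases hbr : b = r
        · have hvd : lh.getD d 0 < n := hvaln d (by omega) (by omega)
          rw [hbr, hself] at h1; omega
        by_cases hdr : d = r
        · have hva : lh.getD a 0 < n := hvaln a (by omega) har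
          rw [hdr, hself] at h2; omega
        · rw [hgd b hbr, hgd d hdr] at h1
          rw [hgd d hdr, hgd a har] at h2
          rw [hgd a har, hgd c hcr] at h3
          exact h3142 ⟨oldPos r a, oldPos r b, oldPos r c, oldPos r d,
            oldPos_mono hab har hbr, oldPos_mono hbc hbr hcr, oldPos_mono hcd hcr hdr,
            oldPos_lt_len hrle (by omega) hdr, h1, h2, h3⟩
    · -- avoid 2413
      rintro ⟨a, b, c, hab, hbc, hc, h1, h2, h3⟩
      rw [hlenh] at hc
      by_cases hbr : b = r
      · have hb1 : lh.getD (b + 1) 0 = l.getD r 0 := by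
          rw [hgdgt (b + 1) (by omega), Nat.add_sub_cancel, hbr]
        have har' : a < r := by omega
        rw [hb1, hgdlt a har'] at h1
        exact absurd h1 (not_lt.2 (le_of_lt (hrmax.2 a har')))
      by_cases har : a = r
      · have hvc : lh.getD c 0 < n := hvaln c (by omega) (by omega)
        rw [har, hself] at h2; omega
      by_cases hb1r : b + 1 = r
      · have hva : lh.getD a 0 < n := hvaln a (by omega) har
        rw [hb1r, hself] at h1; omega
      by_cases hcr : c = r
      · have hvb : lh.getD b 0 < n := hvaln b (by omega) hbr
        rw [hcr, hself] at h3; omega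
      · rw [hgd (b + 1) hb1r, hgd a har] at h1
        rw [hgd a har, hgd c hcr] at h2
        rw [hgd c hcr, hgd b hbr] at h3
        rw [oldPos_succ hbr hb1r] at h1
        refine h2413 ⟨oldPos r a, oldPos r b, oldPos r c,
          oldPos_mono hab har hbr, ?_,
          oldPos_lt_len hrle (by omega) hcr, h1, h2, h3⟩
        rw [← oldPos_succ hbr hb1r]
        exact oldPos_mono hbc hb1r hcr
  · -- lmax = i
    have hlm : ∀ p, p < l.length + 1 → (IsLRMax lh p ↔ (p = r ∨ (IsLRMax l p ∧ p < r))) := by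
      intro p hp
      constructor
      · intro hmax
        rcases Nat.lt_trichotomy p r with h | h | h
        · right
          refine ⟨⟨by omega, fun j hj => ?_⟩, h⟩
          have hjp := hmax.2 j hj
          rwa [hgdlt j (by omega), hgdlt p h] at hjp
        · exact Or.inl h
        · exfalso
          have hrp := hmax.2 r h
          rw [hself] at hrp
          have := hvaln p (by omega) (by omega)
          omega
      · intro hc
        rcases hc with rfl | ⟨hm, hlt⟩
        · refine ⟨by omega, fun j hj => ?_⟩
          rw [hself, hgdlt j hj]
          exact hval j (by omega)
        · refine ⟨by omega, fun j hj => ?_⟩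
          rw [hgdlt j (by omega), hgdlt p hlt]
          exact hm.2 j hj
    have hmono := List.pairwise_iff_get.1 (sorted_lrMaxPos l)
    have hgetD : ∀ j (h : j < L.length), L.getD j 0 = L.get ⟨j, h⟩ := by
      intro j h
      rw [List.getD_eq_getElem L 0 h]; rfl
    show lmax lh = i
    unfold lmax
    rw [hlenh]
    have hset : (Finset.range (l.length + 1)).filter (fun p => IsLRMax lh p)
        = insert r ((Finset.range (i - 1)).image (fun j => L.getD j 0)) := by
      ext p
      simp only [Finset.mem_filter, Finset.mem_range, Finset.mem_insert, Finset.mem_image]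
      constructor
      · rintro ⟨hp, hmax⟩
        rcases (hlm p hp).1 hmax with h | ⟨hm, hlt⟩
        · exact Or.inl h
        · right
          obtain ⟨j, hj⟩ := List.mem_iff_get.1 (mem_lrMaxPos.2 hm)
          refine ⟨j, ?_, by rw [hgetD j j.isLt]; exact hj⟩
          by_contra hge
          push_neg at hge
          have hrp : r ≤ p := by
            rcases eq_or_lt_of_le hge with heq | hlt2
            · rw [hrget, ← hj]
              have hfe : (⟨i - 1, hidx⟩ : Fin L.length) = j := Fin.ext heq
              rw [hfe]
            · refine le_of_lt ?_
              rw [hrget, ← hj]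
              exact hmono ⟨i - 1, hidx⟩ j (by simpa [Fin.lt_def] using hlt2)
          omega
      · rintro (rfl | ⟨j, hji, hj⟩)
        · exact ⟨by omega, (hlm r (by omega)).2 (Or.inl rfl)⟩
        · have hjlen : j < L.length := by omega
          have hpget : p = L.get ⟨j, hjlen⟩ := by rw [← hj, hgetD j hjlen]
          have hpmax : IsLRMax l p := mem_lrMaxPos.1 (by rw [hpget]; exact List.get_mem _ _)
          have hpr : p < r := by
            rw [hpget, hrget]
            exact hmono ⟨j, hjlen⟩ ⟨i - 1, hidx⟩ (by simpa [Fin.lt_def] using hji)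
          exact ⟨by omega, (hlm p (by omega)).2 (Or.inr ⟨hpmax, hpr⟩)⟩
    have hnotmem : r ∉ (Finset.range (i - 1)).image (fun j => L.getD j 0) := by
      simp only [Finset.mem_image, Finset.mem_range, not_exists]
      intro j
      rintro ⟨hji, hj⟩
      have hj' : j < L.length := by omega
      rw [hgetD j hj'] at hj
      have hlt := hmono ⟨j, hj'⟩ ⟨i - 1, hidx⟩ (by simpa [Fin.lt_def] using hji)
      rw [hj, ← hrget] at hlt; omega
    have hinj : Set.InjOn (fun j => L.getD j 0) ((Finset.range (i - 1)) : Set ℕ) := by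
      intro x hx y hy hxy
      simp only [Finset.coe_range, Set.mem_Iio] at hx hy
      have hx' : x < L.length := by omega
      have hy' : y < L.length := by omega
      simp only at hxy
      rcases Nat.lt_trichotomy x y with h | h | h
      · have hlt := hmono ⟨x, hx'⟩ ⟨y, hy'⟩ (by simpa [Fin.lt_def] using h)
        rw [← hgetD x hx', ← hgetD y hy', hxy] at hlt; omega
      · exact h
      · have hlt := hmono ⟨y, hy'⟩ ⟨x, hx'⟩ (by simpa [Fin.lt_def] using h)
        rw [← hgetD x hx', ← hgetD y hy', hxy] at hlt; omega
    rw [hset, Finset.card_insert_of_notMem hnotmem,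
      Finset.card_image_of_injOn hinj, Finset.card_range]
    omega

end Beta10
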